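/- Let n ≥ 12 be even, let t = (n − 2)/2, and let F_n be the simple graph with vertex set {x, y} ∪ {u_1, ..., u_t} ∪ {v_1, ..., v_t} and edge set {x u_1, x v_1, x u_3, u_t y, v_t y, v_{t−2} y} ∪ {u_i u_{i+1}, v_i v_{i+1}, v_i u_{i+1}, u_i v_{i+1} : 1 ≤ i ≤ t − 1}. Then F_n has n vertices and 2n − 2 edges, and F_n → (P_3, C_n). -/

import Mathlib

open SimpleGraph

/-- `F` contains a copy of `G` (an injective graph homomorphism from `G` to `F`). -/
def Contains {α β : Type*} (F : SimpleGraph α) (G : SimpleGraph β) : Prop :=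
  ∃ f : G →g F, Function.Injective f

/-- `F → (G, H)`: for every red/blue coloring of the edges of `F` (given by the spanning
subgraph `R ≤ F` of red edges, the other edges of `F` being blue), there is a red copy of `G`
or a blue copy of `H`. -/
def Arrows {α β γ : Type*} (F : SimpleGraph α) (G : SimpleGraph β) (H : SimpleGraph γ) : Prop :=
  ∀ R : SimpleGraph α, R ≤ F → Contains R G ∨ Contains (F \ R) H

/-- Vertex type of the construction: `x`, `y`, and `uᵢ`, `vᵢ` for `i : Fin t`
(`uᵢ` of the paper, `1 ≤ i ≤ t`, is `u ⟨i - 1⟩`). -/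
abbrev Vt (t : ℕ) := (Unit ⊕ Unit) ⊕ (Fin t ⊕ Fin t)

def vx {t : ℕ} : Vt t := Sum.inl (Sum.inl ())
def vy {t : ℕ} : Vt t := Sum.inl (Sum.inr ())
def vu {t : ℕ} (i : Fin t) : Vt t := Sum.inr (Sum.inl i)
def vv {t : ℕ} (i : Fin t) : Vt t := Sum.inr (Sum.inr i)

/-- Edges `uᵢuᵢ₊₁, vᵢvᵢ₊₁, vᵢuᵢ₊₁, uᵢvᵢ₊₁` for `1 ≤ i ≤ t - 1` (0-based here). -/
def ladderEdges (t : ℕ) : Set (Sym2 (Vt t)) :=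
  { e | ∃ i j : Fin t, (j : ℕ) = (i : ℕ) + 1 ∧
      (e = s(vu i, vu j) ∨ e = s(vv i, vv j) ∨ e = s(vv i, vu j) ∨ e = s(vu i, vv j)) }

/-- The graph `Fₙ` with the extra edges `x u₁, x v₁, x u₃, uₜ y, vₜ y, vₜ₋₂ y`. -/
def Fgraph (t : ℕ) : SimpleGraph (Vt t) :=
  fromEdgeSet
    ({ e | ∃ i : Fin t,
        ((i : ℕ) = 0 ∧ (e = s(vx, vu i) ∨ e = s(vx, vv i))) ∨
        ((i : ℕ) = 2 ∧ e = s(vx, vu i)) ∨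
        ((i : ℕ) = t - 1 ∧ (e = s(vu i, vy) ∨ e = s(vv i, vy))) ∨
        ((i : ℕ) = t - 3 ∧ e = s(vv i, vy)) } ∪ ladderEdges t)

set_option linter.unusedSectionVars false
namespace Fp

open Fin.NatCast

variable {t : ℕ}

/-- `u` vertex with natural-number index (mod `t`). -/
def U [NeZero t] (i : ℕ) : Vt t := vu (i : Fin t)
/-- `v` vertex with natural-number index (mod `t`). -/
def V [NeZero t] (i : ℕ) : Vt t := vv (i : Fin t)

section basic
variable [NeZero t]

lemma U_eq_iff {i j : ℕ} : (U i : Vt t) = U j ↔ i % t = j % t := by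
  simp [U, vu, Fin.ext_iff, Fin.val_natCast]

lemma V_eq_iff {i j : ℕ} : (V i : Vt t) = V j ↔ i % t = j % t := by
  simp [V, vv, Fin.ext_iff, Fin.val_natCast]

@[simp] lemma U_ne_V {i j : ℕ} : (U i : Vt t) ≠ V j := by simp [U, V, vu, vv]
@[simp] lemma V_ne_U {i j : ℕ} : (V i : Vt t) ≠ U j := by simp [U, V, vu, vv]
@[simp] lemma x_ne_U {i : ℕ} : (vx : Vt t) ≠ U i := by simp [U, vu, vx]
@[simp] lemma x_ne_V {i : ℕ} : (vx : Vt t) ≠ V i := by simp [V, vv, vx]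
@[simp] lemma y_ne_U {i : ℕ} : (vy : Vt t) ≠ U i := by simp [U, vu, vy]
@[simp] lemma y_ne_V {i : ℕ} : (vy : Vt t) ≠ V i := by simp [V, vv, vy]
@[simp] lemma U_ne_x {i : ℕ} : (U i : Vt t) ≠ vx := by simp [U, vu, vx]
@[simp] lemma V_ne_x {i : ℕ} : (V i : Vt t) ≠ vx := by simp [V, vv, vx]
@[simp] lemma U_ne_y {i : ℕ} : (U i : Vt t) ≠ vy := by simp [U, vu, vy]
@[simp] lemma V_ne_y {i : ℕ} : (V i : Vt t) ≠ vy := by simp [V, vv, vy]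
@[simp] lemma x_ne_y : (vx : Vt t) ≠ vy := by simp [vx, vy]
@[simp] lemma y_ne_x : (vy : Vt t) ≠ vx := by simp [vx, vy]

lemma vu_eq_U (i : Fin t) : vu i = (U i.val : Vt t) := by
  simp [U, Fin.cast_val_eq_self]

lemma vv_eq_V (i : Fin t) : vv i = (V i.val : Vt t) := by
  simp [V, Fin.cast_val_eq_self]

/-- Membership lemmas in the Fgraph edge set -/

lemma mem_ladder_uu {i : ℕ} (h : i + 1 < t) : s(U i, U (i+1)) ∈ ladderEdges t := by
  refine ⟨(i : Fin t), ((i+1 : ℕ) : Fin t), ?_, Or.inl rfl⟩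
  rw [Fin.val_natCast, Fin.val_natCast, Nat.mod_eq_of_lt h, Nat.mod_eq_of_lt (by omega)]

lemma mem_ladder_vv {i : ℕ} (h : i + 1 < t) : s(V i, V (i+1)) ∈ ladderEdges t := by
  refine ⟨(i : Fin t), ((i+1 : ℕ) : Fin t), ?_, Or.inr (Or.inl rfl)⟩
  rw [Fin.val_natCast, Fin.val_natCast, Nat.mod_eq_of_lt h, Nat.mod_eq_of_lt (by omega)]

lemma mem_ladder_vu {i : ℕ} (h : i + 1 < t) : s(V i, U (i+1)) ∈ ladderEdges t := by
  refine ⟨(i : Fin t), ((i+1 : ℕ) : Fin t), ?_, Or.inr (Or.inr (Or.inl rfl))⟩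
  rw [Fin.val_natCast, Fin.val_natCast, Nat.mod_eq_of_lt h, Nat.mod_eq_of_lt (by omega)]

lemma mem_ladder_uv {i : ℕ} (h : i + 1 < t) : s(U i, V (i+1)) ∈ ladderEdges t := by
  refine ⟨(i : Fin t), ((i+1 : ℕ) : Fin t), ?_, Or.inr (Or.inr (Or.inr rfl))⟩
  rw [Fin.val_natCast, Fin.val_natCast, Nat.mod_eq_of_lt h, Nat.mod_eq_of_lt (by omega)]

/-- Adjacency lemmas for Fgraph -/

lemma fadj_of_ladder {a b : Vt t} (h : s(a, b) ∈ ladderEdges t) (hne : a ≠ b) :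
    (Fgraph t).Adj a b := by
  rw [Fgraph, fromEdgeSet_adj]
  exact ⟨Or.inr h, hne⟩

lemma fadj_uu {i : ℕ} (h : i + 1 < t) : (Fgraph t).Adj (U i) (U (i+1)) :=
  fadj_of_ladder (mem_ladder_uu h) (by
    rw [Ne, U_eq_iff, Nat.mod_eq_of_lt (by omega), Nat.mod_eq_of_lt h]; omega)

lemma fadj_vv {i : ℕ} (h : i + 1 < t) : (Fgraph t).Adj (V i) (V (i+1)) :=
  fadj_of_ladder (mem_ladder_vv h) (by
    rw [Ne, V_eq_iff, Nat.mod_eq_of_lt (by omega), Nat.mod_eq_of_lt h]; omega)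

lemma fadj_vu {i : ℕ} (h : i + 1 < t) : (Fgraph t).Adj (V i) (U (i+1)) :=
  fadj_of_ladder (mem_ladder_vu h) V_ne_U

lemma fadj_uv {i : ℕ} (h : i + 1 < t) : (Fgraph t).Adj (U i) (V (i+1)) :=
  fadj_of_ladder (mem_ladder_uv h) U_ne_V

lemma fadj_conn {a b : Vt t}
    (h : s(a, b) ∈ { e : Sym2 (Vt t) | ∃ i : Fin t,
        ((i : ℕ) = 0 ∧ (e = s(vx, vu i) ∨ e = s(vx, vv i))) ∨
        ((i : ℕ) = 2 ∧ e = s(vx, vu i)) ∨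
        ((i : ℕ) = t - 1 ∧ (e = s(vu i, vy) ∨ e = s(vv i, vy))) ∨
        ((i : ℕ) = t - 3 ∧ e = s(vv i, vy)) }) (hne : a ≠ b) :
    (Fgraph t).Adj a b := by
  rw [Fgraph, fromEdgeSet_adj]
  exact ⟨Or.inl h, hne⟩

lemma fadj_xu0 : (Fgraph t).Adj vx (U 0) :=
  fadj_conn ⟨((0 : ℕ) : Fin t), Or.inl ⟨by rw [Fin.val_natCast, Nat.zero_mod], Or.inl rfl⟩⟩ x_ne_U

lemma fadj_xv0 : (Fgraph t).Adj vx (V 0) :=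
  fadj_conn ⟨((0 : ℕ) : Fin t), Or.inl ⟨by rw [Fin.val_natCast, Nat.zero_mod], Or.inr rfl⟩⟩ x_ne_V

lemma fadj_xu2 (h : 2 < t) : (Fgraph t).Adj vx (U 2) :=
  fadj_conn ⟨((2 : ℕ) : Fin t), Or.inr (Or.inl ⟨by
    rw [Fin.val_natCast]; exact Nat.mod_eq_of_lt h, rfl⟩)⟩ x_ne_U

lemma fadj_uy : (Fgraph t).Adj (U (t-1)) vy :=
  fadj_conn ⟨((t-1 : ℕ) : Fin t), Or.inr (Or.inr (Or.inl ⟨by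
    rw [Fin.val_natCast]
    exact Nat.mod_eq_of_lt (by have := Nat.pos_of_ne_zero (NeZero.ne t); omega), Or.inl rfl⟩))⟩ U_ne_y

lemma fadj_vy : (Fgraph t).Adj (V (t-1)) vy :=
  fadj_conn ⟨((t-1 : ℕ) : Fin t), Or.inr (Or.inr (Or.inl ⟨by
    rw [Fin.val_natCast]
    exact Nat.mod_eq_of_lt (by have := Nat.pos_of_ne_zero (NeZero.ne t); omega), Or.inr rfl⟩))⟩ V_ne_y

lemma fadj_v3y : (Fgraph t).Adj (V (t-3)) vy :=
  fadj_conn ⟨((t-3 : ℕ) : Fin t), Or.inr (Or.inr (Or.inr ⟨by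
    rw [Fin.val_natCast]
    exact Nat.mod_eq_of_lt (by have := Nat.pos_of_ne_zero (NeZero.ne t); omega), rfl⟩))⟩ V_ne_y

end basic

/-- The number of vertices. -/
lemma card_Vt : Fintype.card (Vt t) = 2 + (t + t) := by
  simp [Vt]


section edgecount

open Finset

variable {t : ℕ} [NeZero t]

/-- the edge-generating map for ladder edges -/
def lg (g a : ℕ) : Sym2 (Vt t) :=
  if a = 0 then s(U g, U (g+1)) else if a = 1 then s(V g, V (g+1))
  else if a = 2 then s(V g, U (g+1)) else s(U g, V (g+1))

@[simp] lemma lg0 {g : ℕ} : (lg g 0 : Sym2 (Vt t)) = s(U g, U (g+1)) := rfl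
@[simp] lemma lg1 {g : ℕ} : (lg g 1 : Sym2 (Vt t)) = s(V g, V (g+1)) := rfl
@[simp] lemma lg2 {g : ℕ} : (lg g 2 : Sym2 (Vt t)) = s(V g, U (g+1)) := rfl
@[simp] lemma lg3 {g : ℕ} : (lg g 3 : Sym2 (Vt t)) = s(U g, V (g+1)) := rfl

def Econn (t : ℕ) [NeZero t] : Finset (Sym2 (Vt t)) :=
  {s(vx, U 0), s(vx, V 0), s(vx, U 2), s(U (t-1), vy), s(V (t-1), vy), s(V (t-3), vy)}

def Eladd (t : ℕ) [NeZero t] : Finset (Sym2 (Vt t)) :=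
  ((Finset.range (t-1)) ×ˢ (Finset.range 4)).image (fun p => lg p.1 p.2)

lemma edgeSet_Fgraph_eq (ht : 5 ≤ t) :
    (Fgraph t).edgeSet = ↑(Econn t ∪ Eladd t) := by
  have hm : ∀ i : ℕ, i < t → i % t = i := fun i h => Nat.mod_eq_of_lt h
  rw [Fgraph, edgeSet_fromEdgeSet]
  ext e
  simp only [Set.mem_diff, Set.mem_union, Set.mem_setOf_eq, Finset.coe_union,
    Set.mem_union, Finset.mem_coe, Finset.mem_union]
  constructor
  · rintro ⟨h, -⟩
    rcases h with (⟨i, hi⟩ | ⟨i, j, hij, hcase⟩)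
    · left
      have hiv := i.isLt
      rw [Econn]
      simp only [Finset.mem_insert, Finset.mem_singleton]
      rcases hi with (⟨h0, h | h⟩ | ⟨h2, h⟩ | ⟨h1, h | h⟩ | ⟨h3, h⟩) <;> subst h
      · exact Or.inl (by rw [vu_eq_U, h0])
      · exact Or.inr (Or.inl (by rw [vv_eq_V, h0]))
      · exact Or.inr (Or.inr (Or.inl (by rw [vu_eq_U, h2])))
      · exact Or.inr (Or.inr (Or.inr (Or.inl (by rw [vu_eq_U, h1]))))
      · exact Or.inr (Or.inr (Or.inr (Or.inr (Or.inl (by rw [vv_eq_V, h1])))))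
      · exact Or.inr (Or.inr (Or.inr (Or.inr (Or.inr (by rw [vv_eq_V, h3])))))
    · right
      have hjv := j.isLt
      rw [Eladd]
      simp only [Finset.mem_image, Finset.mem_product, Finset.mem_range, Prod.exists]
      rcases hcase with h | h | h | h <;> subst h
      · exact ⟨i.val, 0, ⟨by omega, by omega⟩, by
          rw [lg0, vu_eq_U, vu_eq_U, hij]⟩
      · exact ⟨i.val, 1, ⟨by omega, by omega⟩, by
          rw [lg1, vv_eq_V, vv_eq_V, hij]⟩
      · exact ⟨i.val, 2, ⟨by omega, by omega⟩, by
          rw [lg2, vv_eq_V, vu_eq_U, hij]⟩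
      · exact ⟨i.val, 3, ⟨by omega, by omega⟩, by
          rw [lg3, vu_eq_U, vv_eq_V, hij]⟩
  · intro h
    rcases h with h | h
    · rw [Econn] at h
      simp only [Finset.mem_insert, Finset.mem_singleton] at h
      rcases h with h | h | h | h | h | h <;> subst h <;>
        refine ⟨Or.inl ?_, by simp [Sym2.mk_isDiag_iff]⟩
      · exact ⟨((0:ℕ) : Fin t), Or.inl ⟨by rw [Fin.val_natCast, Nat.zero_mod], Or.inl rfl⟩⟩
      · exact ⟨((0:ℕ) : Fin t), Or.inl ⟨by rw [Fin.val_natCast, Nat.zero_mod], Or.inr rfl⟩⟩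
      · exact ⟨((2:ℕ) : Fin t), Or.inr (Or.inl ⟨by rw [Fin.val_natCast]; exact hm _ (by omega), rfl⟩)⟩
      · exact ⟨((t-1:ℕ) : Fin t), Or.inr (Or.inr (Or.inl ⟨by
          rw [Fin.val_natCast]; exact hm _ (by omega), Or.inl rfl⟩))⟩
      · exact ⟨((t-1:ℕ) : Fin t), Or.inr (Or.inr (Or.inl ⟨by
          rw [Fin.val_natCast]; exact hm _ (by omega), Or.inr rfl⟩))⟩
      · exact ⟨((t-3:ℕ) : Fin t), Or.inr (Or.inr (Or.inr ⟨by
          rw [Fin.val_natCast]; exact hm _ (by omega), rfl⟩))⟩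
    · rw [Eladd] at h
      simp only [Finset.mem_image, Finset.mem_product, Finset.mem_range, Prod.exists] at h
      obtain ⟨g, a, ⟨hg, ha⟩, he⟩ := h
      subst he
      interval_cases a <;> simp only [lg0, lg1, lg2, lg3] <;> refine ⟨Or.inr ?_, ?_⟩
      · exact mem_ladder_uu (by omega)
      · show ¬ Sym2.IsDiag _
        rw [Sym2.mk_isDiag_iff, U_eq_iff, hm _ (by omega : g < t), hm _ (by omega : g+1 < t)]
        omega
      · exact mem_ladder_vv (by omega)
      · show ¬ Sym2.IsDiag _
        rw [Sym2.mk_isDiag_iff, V_eq_iff, hm _ (by omega : g < t), hm _ (by omega : g+1 < t)]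
        omega
      · exact mem_ladder_vu (by omega)
      · show ¬ Sym2.IsDiag _
        rw [Sym2.mk_isDiag_iff]
        exact V_ne_U
      · exact mem_ladder_uv (by omega)
      · show ¬ Sym2.IsDiag _
        rw [Sym2.mk_isDiag_iff]
        exact U_ne_V

lemma ncard_edgeSet (ht : 5 ≤ t) : (Fgraph t).edgeSet.ncard = 4 * t + 2 := by
  have hm : ∀ i : ℕ, i < t → i % t = i := fun i h => Nat.mod_eq_of_lt h
  have hm1 : (t-1) % t = t-1 := hm _ (by omega)
  have hm3 : (t-3) % t = t-3 := hm _ (by omega)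
  have hm0 : (0:ℕ) % t = 0 := Nat.zero_mod t
  have hm2 : (2:ℕ) % t = 2 := hm _ (by omega)
  have hdisj : Disjoint (Econn t) (Eladd t) := by
    rw [Finset.disjoint_left]
    intro e heC heL
    rw [Eladd] at heL
    simp only [Finset.mem_image, Finset.mem_product, Finset.mem_range, Prod.exists] at heL
    obtain ⟨g, a, ⟨hg, ha⟩, he⟩ := heL
    have hx : vx ∈ e ∨ vy ∈ e := by
      rw [Econn] at heC
      simp only [Finset.mem_insert, Finset.mem_singleton] at heC
      rcases heC with h | h | h | h | h | h <;> subst h <;> simp [Sym2.mem_iff]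
    subst he
    interval_cases a <;> norm_num [lg, Sym2.mem_iff, U, V, vu, vv, vx, vy] at hx <;> simp at hx
  have dU : (U 0 : Vt t) ≠ U 2 := by rw [Ne, U_eq_iff, hm0, hm2]; omega
  have dV : (V (t-1) : Vt t) ≠ V (t-3) := by rw [Ne, V_eq_iff, hm1, hm3]; omega
  have hcardC : (Econn t).card = 6 := by
    rw [Econn]
    rw [Finset.card_insert_of_notMem (by simp [Sym2.eq_iff, dU, dU.symm])]
    rw [Finset.card_insert_of_notMem (by simp [Sym2.eq_iff])]
    rw [Finset.card_insert_of_notMem (by simp [Sym2.eq_iff])]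
    rw [Finset.card_insert_of_notMem (by simp [Sym2.eq_iff, dV, dV.symm])]
    rw [Finset.card_insert_of_notMem (by simp [Sym2.eq_iff, dV, dV.symm])]
    simp
  have hcardL : (Eladd t).card = 4 * (t - 1) := by
    rw [Eladd, Finset.card_image_of_injOn, Finset.card_product]
    · simp [mul_comm]
    · rintro ⟨g, a⟩ hga ⟨g', a'⟩ hga' heq
      simp only [Finset.coe_product, Set.mem_prod, Finset.mem_coe, Finset.mem_range] at hga hga'
      obtain ⟨hg, ha⟩ := hga
      obtain ⟨hg', ha'⟩ := hga'
      have hmg : g % t = g := hm _ (by omega)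
      have hmg1 : (g+1) % t = g+1 := hm _ (by omega)
      have hmg' : g' % t = g' := hm _ (by omega)
      have hmg1' : (g'+1) % t = g'+1 := hm _ (by omega)
      have : (g = g' ∧ a = a') := by
        interval_cases a <;> interval_cases a' <;>
          simp only [lg0, lg1, lg2, lg3] at heq <;>
          rw [Sym2.eq_iff] at heq <;>
          rcases heq with ⟨h1, h2⟩ | ⟨h1, h2⟩ <;>
          simp only [U, V, vu, vv, Sum.inr.injEq, Sum.inl.injEq, Fin.ext_iff,
            Fin.val_natCast, hmg, hmg1, hmg', hmg1', reduceCtorEq] at h1 h2 <;>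
          omega
      exact Prod.ext_iff.mpr ⟨this.1, this.2⟩
  rw [edgeSet_Fgraph_eq ht, Set.ncard_coe_finset, Finset.card_union_of_disjoint hdisj,
    hcardC, hcardL]
  omega

end edgecount

section cycle

open List

lemma chain'_glue {α : Type*} {P : α → α → Prop} {xs ys : List α} {a : α}
    (h1 : List.Chain' P (xs ++ [a])) (h2 : List.Chain' P (a :: ys)) :
    List.Chain' P (xs ++ a :: ys) := by
  have hsh : xs ++ a :: ys = (xs ++ [a]) ++ ys := by simp
  rw [hsh]
  refine h1.append (List.isChain_cons.mp h2).2 ?_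
  intro p hp q hq
  rw [List.getLast?_concat, Option.mem_def, Option.some_inj] at hp
  subst hp
  exact (List.isChain_cons.mp h2).1 q hq

lemma chain'_map_range' {α : Type*} {P : α → α → Prop} (f : ℕ → α) :
    ∀ (l m : ℕ), (∀ i, l ≤ i → i < l + m → P (f i) (f (i+1))) →
      List.Chain' P ((List.range' l (m+1)).map f)
  | l, 0, _ => by exact List.isChain_singleton _
  | l, m+1, h => by
    rw [List.range'_succ, List.map_cons]
    refine List.isChain_cons.mpr ⟨?_, chain'_map_range' f (l+1) m
      (fun i h1 h2 => h i (by omega) (by omega))⟩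
    intro q hq
    rw [List.range'_succ, List.map_cons, List.head?_cons, Option.mem_def, Option.some_inj] at hq
    subst hq
    exact h l (le_refl l) (by omega)

variable {t : ℕ} [NeZero t]

/-- column index of a vertex -/
def colv : Vt t → ℕ
  | Sum.inr (Sum.inl i) => i.val
  | Sum.inr (Sum.inr i) => i.val
  | Sum.inl (Sum.inl _) => t
  | Sum.inl (Sum.inr _) => t + 1

@[simp] lemma colv_U {i : ℕ} (h : i < t) : colv (U i : Vt t) = i := by
  simp [colv, U, vu, Fin.val_natCast, Nat.mod_eq_of_lt h]

@[simp] lemma colv_V {i : ℕ} (h : i < t) : colv (V i : Vt t) = i := by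
  simp [colv, V, vv, Fin.val_natCast, Nat.mod_eq_of_lt h]

@[simp] lemma colv_x : colv (vx : Vt t) = t := rfl
@[simp] lemma colv_y : colv (vy : Vt t) = t + 1 := rfl

lemma contains_cycle (ht : 5 ≤ t) (G : SimpleGraph (Vt t))
    (l r : ℕ) (hlr : l ≤ r) (hr : r < t)
    (A B : ℕ → Vt t)
    (hAB : ∀ i, l ≤ i → i ≤ r → (A i = U i ∧ B i = V i) ∨ (A i = V i ∧ B i = U i))
    (leftInt rB rA : List (Vt t))
    (hlen : leftInt.length = 2 * l)
    (hrlen : rB.length + rA.length = 2 * (t - 1 - r))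
    (hLmem : ∀ z ∈ leftInt, ∃ i, i < l ∧ (z = U i ∨ z = V i))
    (hRmem : ∀ z ∈ rB ++ rA, ∃ i, r < i ∧ i < t ∧ (z = U i ∨ z = V i))
    (ndL : leftInt.Nodup) (ndR : (rB ++ rA).Nodup)
    (ch1 : List.Chain' G.Adj (vx :: (leftInt ++ [B l])))
    (ch2 : ∀ g, l ≤ g → g < r → G.Adj (B g) (B (g+1)) ∧ G.Adj (A g) (A (g+1)))
    (ch3 : List.Chain' G.Adj (B r :: (rB ++ [vy])))
    (ch4 : List.Chain' G.Adj (vy :: (rA ++ [A r])))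
    (ch5 : G.Adj (A l) vx) :
    Contains G (cycleGraph (2*t+2)) := by
  have hm : l + (r - l) = r := by omega
  set m := r - l with hmdef
  set pathB := (List.range' l (m+1)).map B with hpB
  set pathA := (List.range' l (m+1)).map A with hpA
  set cyc := vx :: (leftInt ++ (pathB ++ (rB ++ vy :: (rA ++ pathA.reverse)))) with hcyc
  have hlenB : pathB.length = m + 1 := by simp [hpB]
  have hlenA : pathA.length = m + 1 := by simp [hpA]
  have hlength : cyc.length = 2*t+2 := by
    simp only [hcyc, List.length_cons, List.length_append, hlenB, hlenA,
      List.length_reverse]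
    omega
  -- decompositions
  have dB2 : pathB = (List.range' l m).map B ++ [B r] := by
    rw [hpB, List.range'_concat, List.map_append, List.map_singleton]
    norm_num [hm]
  have dA2 : pathA = (List.range' l m).map A ++ [A r] := by
    rw [hpA, List.range'_concat, List.map_append, List.map_singleton]
    norm_num [hm]
  have dB1 : pathB = B l :: (List.range' (l+1) m).map B := by
    rw [hpB, List.range'_succ, List.map_cons]
  have dArev : pathA.reverse = A r :: ((List.range' l m).map A).reverse := by
    rw [dA2]; simp
  have headA : pathA.head? = some (A l) := by
    rw [hpA, List.range'_succ, List.map_cons, List.head?_cons]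
  -- the closed chain
  have hchain : List.Chain' G.Adj (cyc ++ [vx]) := by
    have c2 : List.Chain' G.Adj pathB :=
      chain'_map_range' B l m (fun i h1 h2 => (ch2 i h1 (by omega)).1)
    have c5a : List.Chain' G.Adj pathA.reverse := by
      refine List.isChain_reverse.mpr ?_
      exact chain'_map_range' A l m (fun i h1 h2 => ((ch2 i h1 (by omega)).2).symm)
    have step1 : List.Chain' G.Adj ((vx :: leftInt) ++ pathB) := by
      rw [dB1]
      refine chain'_glue (a := B l) (by simpa using ch1) ?_
      rw [← List.map_cons, ← List.range'_succ]
      exact c2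
    have step2 : List.Chain' G.Adj (((vx :: leftInt) ++ (List.range' l m).map B) ++
        (B r :: (rB ++ [vy]))) := by
      refine chain'_glue ?_ ch3
      rw [List.append_assoc, ← dB2]
      exact step1
    have step3 : List.Chain' G.Adj ((((vx :: leftInt) ++ (List.range' l m).map B) ++
        (B r :: rB)) ++ (vy :: (rA ++ [A r]))) := by
      refine chain'_glue ?_ ch4
      have hsh : ((((vx :: leftInt) ++ (List.range' l m).map B) ++ (B r :: rB)) ++ [vy])
          = ((vx :: leftInt) ++ (List.range' l m).map B) ++ (B r :: (rB ++ [vy])) := by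
        simp
      rw [hsh]
      exact step2
    have c5 : List.Chain' G.Adj (pathA.reverse ++ [vx]) := by
      refine c5a.append (by simp) ?_
      intro p hp q hq
      rw [List.getLast?_reverse, headA, Option.mem_def, Option.some_inj] at hp
      rw [List.head?_cons, Option.mem_def, Option.some_inj] at hq
      subst hp; subst hq
      exact ch5
    have step4 : List.Chain' G.Adj (((((vx :: leftInt) ++ (List.range' l m).map B) ++
        (B r :: rB)) ++ (vy :: rA)) ++
        (A r :: (((List.range' l m).map A).reverse ++ [vx]))) := by
      refine chain'_glue ?_ ?_
      · have hsh : (((((vx :: leftInt) ++ (List.range' l m).map B) ++ (B r :: rB)) ++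
            (vy :: rA)) ++ [A r])
            = (((vx :: leftInt) ++ (List.range' l m).map B) ++ (B r :: rB)) ++
              (vy :: (rA ++ [A r])) := by simp
        rw [hsh]
        exact step3
      · have hsh : A r :: (((List.range' l m).map A).reverse ++ [vx])
            = pathA.reverse ++ [vx] := by rw [dArev]; simp
        rw [hsh]
        exact c5
    have hfinal : cyc ++ [vx] = ((((vx :: leftInt) ++ (List.range' l m).map B) ++
        (B r :: rB)) ++ (vy :: rA)) ++
        (A r :: (((List.range' l m).map A).reverse ++ [vx])) := by
      rw [hcyc, dB2, dArev]
      simp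
    rw [hfinal]
    exact step4
  -- nodup
  have memB : ∀ z ∈ pathB, ∃ i, l ≤ i ∧ i ≤ r ∧ z = B i := by
    intro z hz
    rw [hpB, List.mem_map] at hz
    obtain ⟨i, hi, rfl⟩ := hz
    rw [List.mem_range'] at hi
    obtain ⟨k, hk, rfl⟩ := hi
    exact ⟨l + 1*k, by omega, by omega, rfl⟩
  have memA : ∀ z ∈ pathA.reverse, ∃ i, l ≤ i ∧ i ≤ r ∧ z = A i := by
    intro z hz
    rw [List.mem_reverse, hpA, List.mem_map] at hz
    obtain ⟨i, hi, rfl⟩ := hz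
    rw [List.mem_range'] at hi
    obtain ⟨k, hk, rfl⟩ := hi
    exact ⟨l + 1*k, by omega, by omega, rfl⟩
  have colB : ∀ i, l ≤ i → i ≤ r → colv (B i) = i := by
    intro i h1 h2
    rcases hAB i h1 h2 with ⟨_, hB⟩ | ⟨_, hB⟩ <;> rw [hB]
    · exact colv_V (by omega)
    · exact colv_U (by omega)
  have colA : ∀ i, l ≤ i → i ≤ r → colv (A i) = i := by
    intro i h1 h2
    rcases hAB i h1 h2 with ⟨hA, _⟩ | ⟨hA, _⟩ <;> rw [hA]
    · exact colv_U (by omega)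
    · exact colv_V (by omega)
  have hcolL : ∀ z ∈ leftInt, colv z < l := by
    intro z hz
    obtain ⟨i, hi, h | h⟩ := hLmem z hz <;> subst h
    · rw [colv_U (by omega)]; omega
    · rw [colv_V (by omega)]; omega
  have hcolB : ∀ z ∈ pathB, l ≤ colv z ∧ colv z ≤ r := by
    intro z hz
    obtain ⟨i, h1, h2, rfl⟩ := memB z hz
    rw [colB i h1 h2]; omega
  have hcolA : ∀ z ∈ pathA.reverse, l ≤ colv z ∧ colv z ≤ r := by
    intro z hz
    obtain ⟨i, h1, h2, rfl⟩ := memA z hz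
    rw [colA i h1 h2]; omega
  have hcolR : ∀ z ∈ rB ++ rA, r < colv z ∧ colv z < t := by
    intro z hz
    obtain ⟨i, hi1, hi2, h | h⟩ := hRmem z hz <;> subst h
    · rw [colv_U hi2]; omega
    · rw [colv_V hi2]; omega
  have ndB : pathB.Nodup := by
    rw [hpB]
    refine List.Nodup.map_on ?_ (List.nodup_range' ..)
    intro p hp q hq hpq
    rw [List.mem_range'] at hp hq
    obtain ⟨k1, hk1, rfl⟩ := hp
    obtain ⟨k2, hk2, rfl⟩ := hq
    have e1 := colB (l + 1*k1) (by omega) (by omega)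
    have e2 := colB (l + 1*k2) (by omega) (by omega)
    rw [← e1, ← e2, hpq]
  have ndA : pathA.reverse.Nodup := by
    rw [List.nodup_reverse, hpA]
    refine List.Nodup.map_on ?_ (List.nodup_range' ..)
    intro p hp q hq hpq
    rw [List.mem_range'] at hp hq
    obtain ⟨k1, hk1, rfl⟩ := hp
    obtain ⟨k2, hk2, rfl⟩ := hq
    have e1 := colA (l + 1*k1) (by omega) (by omega)
    have e2 := colA (l + 1*k2) (by omega) (by omega)
    rw [← e1, ← e2, hpq]
  have ndRA : rA.Nodup := ((List.nodup_append).mp ndR).2.1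
  have ndRB : rB.Nodup := ((List.nodup_append).mp ndR).1
  have disjR : rB.Disjoint rA := fun _ ha hb => ((List.nodup_append).mp ndR).2.2 _ ha _ hb rfl
  have hnodup : cyc.Nodup := by
    rw [hcyc, List.nodup_cons]
    constructor
    · -- vx not in body
      intro hmem
      simp only [List.mem_append, List.mem_cons] at hmem
      rcases hmem with h | h | h | h | h | h
      · have hc := hcolL _ h; rw [colv_x] at hc; omega
      · have hc := (hcolB _ h).2; rw [colv_x] at hc; omega
      · have hc := (hcolR _ (List.mem_append.mpr (Or.inl h))).2
        rw [colv_x] at hc; omega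
      · exact x_ne_y h
      · have hc := (hcolR _ (List.mem_append.mpr (Or.inr h))).2
        rw [colv_x] at hc; omega
      · have hc := (hcolA _ h).2; rw [colv_x] at hc; omega
    · -- body nodup
      rw [List.nodup_append]
      refine ⟨ndL, ?_, ?_⟩
      · rw [List.nodup_append]
        refine ⟨ndB, ?_, ?_⟩
        · rw [List.nodup_append]
          refine ⟨ndRB, ?_, ?_⟩
          · rw [List.nodup_cons]
            constructor
            · intro hmem
              rcases List.mem_append.mp hmem with h | h
              · have hc := (hcolR _ (List.mem_append.mpr (Or.inr h))).2
                rw [colv_y] at hc; omega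
              · have hc := (hcolA _ h).2; rw [colv_y] at hc; omega
            · rw [List.nodup_append]
              refine ⟨ndRA, ndA, ?_⟩
              intro z hz w hz' hzw; subst hzw
              have h1 := (hcolR _ (List.mem_append.mpr (Or.inr hz))).1
              have h2 := (hcolA _ hz').2
              omega
          · intro z hz w hz' hzw; subst hzw
            have h1 := (hcolR _ (List.mem_append.mpr (Or.inl hz)))
            rcases List.mem_cons.mp hz' with h | h
            · subst h; rw [colv_y] at h1; omega
            · rcases List.mem_append.mp h with h' | h'
              · exact disjR hz h'
              · have h2 := (hcolA _ h').2
                omega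
        · intro z hz w hz' hzw; subst hzw
          have hb := hcolB _ hz
          rcases List.mem_append.mp hz' with h | h
          · have := (hcolR _ (List.mem_append.mpr (Or.inl h))).1; omega
          · rcases List.mem_cons.mp h with h | h
            · subst h; rw [colv_y] at hb; omega
            · rcases List.mem_append.mp h with h' | h'
              · have := (hcolR _ (List.mem_append.mpr (Or.inr h'))).1; omega
              · obtain ⟨i, hi1, hi2, rfl⟩ := memB z hz
                obtain ⟨j, hj1, hj2, hBA⟩ := memA _ h'
                have hij : i = j := by
                  have e1 := colB i hi1 hi2
                  have e2 := colA j hj1 hj2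
                  rw [hBA] at e1
                  omega
                subst hij
                rcases hAB i hi1 hi2 with ⟨hA', hB'⟩ | ⟨hA', hB'⟩ <;>
                  rw [hA', hB'] at hBA
                · exact V_ne_U hBA
                · exact U_ne_V hBA
      · intro z hz w hz' hzw; subst hzw
        have hl := hcolL _ hz
        simp only [List.mem_append, List.mem_cons] at hz'
        rcases hz' with h | h | h | h | h
        · have := (hcolB _ h).1; omega
        · have := (hcolR _ (List.mem_append.mpr (Or.inl h))).1; omega
        · subst h; rw [colv_y] at hl; omega
        · have := (hcolR _ (List.mem_append.mpr (Or.inr h))).1; omega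
        · have := (hcolA _ h).1; omega
  -- build the embedding
  set w : ℕ → Vt t := fun k => cyc.getD k vx with hwdef
  have hlen' : (cyc ++ [vx]).length = 2*t+2+1 := by simp [hlength]
  have key : ∀ k, k < 2*t+2 → G.Adj (w k) (w ((k+1) % (2*t+2))) := by
    intro k hk
    have hc := List.isChain_iff_getElem.mp hchain k (by rw [hlen']; omega)
    have e1 : (cyc ++ [vx])[k]'(by rw [hlen']; omega) = w k := by
      rw [List.getElem_append_left (by omega : k < cyc.length)]
      exact (List.getD_eq_getElem cyc vx (by omega)).symm
    rw [e1] at hc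
    by_cases hk1 : k + 1 < 2*t+2
    · have e2 : (cyc ++ [vx])[k+1]'(by rw [hlen']; omega) = w (k+1) := by
        rw [List.getElem_append_left (by omega : k+1 < cyc.length)]
        exact (List.getD_eq_getElem cyc vx (by omega)).symm
      rw [e2] at hc
      rw [Nat.mod_eq_of_lt hk1]
      exact hc
    · have hke : k + 1 = 2*t+2 := by omega
      have e2 : (cyc ++ [vx])[k+1]'(by rw [hlen']; omega) = vx := by
        rw [List.getElem_append_right (by omega : cyc.length ≤ k+1)]
        simp
      rw [e2] at hc
      rw [hke, Nat.mod_self]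
      have hw0 : w 0 = vx := by rw [hwdef]; simp [hcyc]
      rw [hw0]
      exact hc
  refine ⟨⟨fun a : Fin (2*t+2) => w a.val, ?_⟩, ?_⟩
  · intro a b hadj
    have hadj' : a - b = 1 ∨ b - a = 1 := cycleGraph_adj.mp hadj
    rcases hadj' with h | h
    · have hab : a = b + 1 := by rw [← h]; abel
      have hval : a.val = (b.val + 1) % (2*t+2) := by
        rw [hab, Fin.add_def, Fin.val_one]
      show G.Adj (w a.val) (w b.val)
      rw [hval]
      exact (key b.val b.isLt).symm
    · have hab : b = a + 1 := by rw [← h]; abel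
      have hval : b.val = (a.val + 1) % (2*t+2) := by
        rw [hab, Fin.add_def, Fin.val_one]
      show G.Adj (w a.val) (w b.val)
      rw [hval]
      exact key a.val a.isLt
  · intro a b hab
    have ha : a.val < cyc.length := by rw [hlength]; exact a.isLt
    have hb : b.val < cyc.length := by rw [hlength]; exact b.isLt
    have hab' : cyc.getD a.val vx = cyc.getD b.val vx := hab
    rw [List.getD_eq_getElem cyc vx ha, List.getD_eq_getElem cyc vx hb] at hab'
    exact Fin.ext ((hnodup.getElem_inj_iff).mp hab')

end cycle

section mainlemma

def spar (c : ℕ → Bool) (l i : ℕ) : Bool :=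
  (List.range' l (i-l)).foldl (fun b g => xor b (c g)) false

lemma spar_base (c : ℕ → Bool) (l : ℕ) : spar c l l = false := by simp [spar]

lemma spar_succ (c : ℕ → Bool) {l i : ℕ} (h : l ≤ i) :
    spar c l (i+1) = xor (spar c l i) (c i) := by
  unfold spar
  rw [show i + 1 - l = (i - l) + 1 from by omega, List.range'_concat,
    show l + 1*(i-l) = i from by omega, List.foldl_append]
  rfl

variable {t : ℕ} [NeZero t]

lemma fadj_uu' {i j : ℕ} (hj : j = i + 1) (h : j < t) : (Fgraph t).Adj (U i) (U j) := by
  subst hj; exact fadj_uu h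

lemma fadj_vv' {i j : ℕ} (hj : j = i + 1) (h : j < t) : (Fgraph t).Adj (V i) (V j) := by
  subst hj; exact fadj_vv h

lemma fadj_vu' {i j : ℕ} (hj : j = i + 1) (h : j < t) : (Fgraph t).Adj (V i) (U j) := by
  subst hj; exact fadj_vu h

lemma fadj_uv' {i j : ℕ} (hj : j = i + 1) (h : j < t) : (Fgraph t).Adj (U i) (V j) := by
  subst hj; exact fadj_uv h

lemma U_ne_U {i j : ℕ} (hi : i < t) (hj : j < t) (h : i ≠ j) : (U i : Vt t) ≠ U j := by
  rw [Ne, U_eq_iff, Nat.mod_eq_of_lt hi, Nat.mod_eq_of_lt hj]; omega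

lemma V_ne_V {i j : ℕ} (hi : i < t) (hj : j < t) (h : i ≠ j) : (V i : Vt t) ≠ V j := by
  rw [Ne, V_eq_iff, Nat.mod_eq_of_lt hi, Nat.mod_eq_of_lt hj]; omega

lemma main_cycle (ht : 5 ≤ t) (R : SimpleGraph (Vt t))
    (hM : ∀ a b c : Vt t, R.Adj a b → R.Adj a c → b = c) :
    Contains (Fgraph t \ R) (cycleGraph (2*t+2)) := by
  classical
  set G := Fgraph t \ R with hG
  have gadj : ∀ a b : Vt t, (Fgraph t).Adj a b → ¬ R.Adj a b → G.Adj a b := by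
    intro a b h1 h2; rw [hG, sdiff_adj]; exact ⟨h1, h2⟩
  have u01 : (U 0 : Vt t) ≠ U 1 := U_ne_U (by omega) (by omega) (by omega)
  have u10 : (U 1 : Vt t) ≠ U 0 := U_ne_U (by omega) (by omega) (by omega)
  have v01 : (V 0 : Vt t) ≠ V 1 := V_ne_V (by omega) (by omega) (by omega)
  have v10 : (V 1 : Vt t) ≠ V 0 := V_ne_V (by omega) (by omega) (by omega)
  -- LEFT PACKAGE
  obtain ⟨l, leftInt, hl2, hlen, hLmem, ndL, ch1', ch5'⟩ :
      ∃ (l : ℕ) (leftInt : List (Vt t)), (l = 0 ∨ l = 2) ∧ leftInt.length = 2*l ∧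
        (∀ z ∈ leftInt, ∃ i, i < l ∧ (z = U i ∨ z = V i)) ∧ leftInt.Nodup ∧
        List.Chain' G.Adj (vx :: (leftInt ++ [V l])) ∧ G.Adj (U l) vx := by
    by_cases hxu : R.Adj vx (U 0)
    · -- bad x, xu0 red
      have noRx : ∀ z : Vt t, z ≠ U 0 → ¬R.Adj vx z := fun z hz hr => hz (hM _ _ _ hr hxu)
      have noRu0 : ∀ z : Vt t, z ≠ vx → ¬R.Adj (U 0) z := fun z hz hr =>
        hz (hM _ _ _ hr hxu.symm)
      have e_xv0 : G.Adj vx (V 0) := gadj _ _ fadj_xv0 (noRx _ (by simp))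
      have e_u0u1 : G.Adj (U 0) (U 1) := gadj _ _ (fadj_uu (by omega)) (noRu0 _ (by simp))
      have e_u0v1 : G.Adj (U 0) (V 1) := gadj _ _ (fadj_uv (by omega)) (noRu0 _ (by simp))
      have e_xu2 : G.Adj vx (U 2) := gadj _ _ (fadj_xu2 (by omega)) (noRx _
        (U_ne_U (by omega) (by omega) (by omega)))
      by_cases hch : R.Adj (V 0) (U 1) ∨ R.Adj (V 1) (V 2)
      · -- use S2 = [V 0, V 1, U 0, U 1]
        have e_v0v1 : G.Adj (V 0) (V 1) := by
          refine gadj _ _ (fadj_vv (by omega)) ?_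
          intro hr
          rcases hch with h | h
          · exact V_ne_U (hM _ _ _ hr h)
          · exact V_ne_V (by omega) (by omega) (by omega) (hM _ _ _ hr.symm h)
        have e_u1v2 : G.Adj (U 1) (V 2) := by
          refine gadj _ _ (fadj_uv (by omega)) ?_
          intro hr
          rcases hch with h | h
          · exact V_ne_V (by omega) (by omega) (by omega) (hM _ _ _ h.symm hr)
          · exact U_ne_V (hM _ _ _ hr.symm h.symm)
        refine ⟨2, [V 0, V 1, U 0, U 1], Or.inr rfl, rfl, ?_, ?_, ?_, e_xu2.symm⟩
        · intro z hz
          simp only [List.mem_cons, List.not_mem_nil, or_false] at hz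
          rcases hz with h | h | h | h <;> subst h
          · exact ⟨0, by omega, Or.inr rfl⟩
          · exact ⟨1, by omega, Or.inr rfl⟩
          · exact ⟨0, by omega, Or.inl rfl⟩
          · exact ⟨1, by omega, Or.inl rfl⟩
        · simp [u01, u10, v01, v10]
        · simp only [List.cons_append, List.nil_append, List.Chain', List.isChain_cons_cons,
            List.isChain_singleton, and_true]
          exact ⟨e_xv0, e_v0v1, e_u0v1.symm, e_u0u1, e_u1v2⟩
      · -- use S1 = [V 0, U 1, U 0, V 1]
        push_neg at hch
        have e_v0u1 : G.Adj (V 0) (U 1) := gadj _ _ (fadj_vu (by omega)) hch.1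
        have e_v1v2 : G.Adj (V 1) (V 2) := gadj _ _ (fadj_vv (by omega)) hch.2
        refine ⟨2, [V 0, U 1, U 0, V 1], Or.inr rfl, rfl, ?_, ?_, ?_, e_xu2.symm⟩
        · intro z hz
          simp only [List.mem_cons, List.not_mem_nil, or_false] at hz
          rcases hz with h | h | h | h <;> subst h
          · exact ⟨0, by omega, Or.inr rfl⟩
          · exact ⟨1, by omega, Or.inl rfl⟩
          · exact ⟨0, by omega, Or.inl rfl⟩
          · exact ⟨1, by omega, Or.inr rfl⟩
        · simp [u01, u10, v01, v10]
        · simp only [List.cons_append, List.nil_append, List.Chain', List.isChain_cons_cons,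
            List.isChain_singleton, and_true]
          exact ⟨e_xv0, e_v0u1, e_u0u1.symm, e_u0v1, e_v1v2⟩
    · by_cases hxv : R.Adj vx (V 0)
      · -- bad x, xv0 red
        have noRx : ∀ z : Vt t, z ≠ V 0 → ¬R.Adj vx z := fun z hz hr => hz (hM _ _ _ hr hxv)
        have noRv0 : ∀ z : Vt t, z ≠ vx → ¬R.Adj (V 0) z := fun z hz hr =>
          hz (hM _ _ _ hr hxv.symm)
        have e_xu0 : G.Adj vx (U 0) := gadj _ _ fadj_xu0 (noRx _ (by simp))
        have e_v0v1 : G.Adj (V 0) (V 1) := gadj _ _ (fadj_vv (by omega)) (noRv0 _ (by simp))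
        have e_v0u1 : G.Adj (V 0) (U 1) := gadj _ _ (fadj_vu (by omega)) (noRv0 _ (by simp))
        have e_xu2 : G.Adj vx (U 2) := gadj _ _ (fadj_xu2 (by omega)) (noRx _ (by simp))
        by_cases hch : R.Adj (U 0) (V 1) ∨ R.Adj (U 1) (V 2)
        · -- use T2 = [U 0, U 1, V 0, V 1]
          have e_u0u1 : G.Adj (U 0) (U 1) := by
            refine gadj _ _ (fadj_uu (by omega)) ?_
            intro hr
            rcases hch with h | h
            · exact U_ne_V (hM _ _ _ hr h)
            · exact V_ne_U (hM _ _ _ h hr.symm)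
          have e_v1v2 : G.Adj (V 1) (V 2) := by
            refine gadj _ _ (fadj_vv (by omega)) ?_
            intro hr
            rcases hch with h | h
            · exact V_ne_U (hM _ _ _ hr h.symm)
            · exact V_ne_U (hM _ _ _ hr.symm h.symm)
          refine ⟨2, [U 0, U 1, V 0, V 1], Or.inr rfl, rfl, ?_, ?_, ?_, e_xu2.symm⟩
          · intro z hz
            simp only [List.mem_cons, List.not_mem_nil, or_false] at hz
            rcases hz with h | h | h | h <;> subst h
            · exact ⟨0, by omega, Or.inl rfl⟩
            · exact ⟨1, by omega, Or.inl rfl⟩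
            · exact ⟨0, by omega, Or.inr rfl⟩
            · exact ⟨1, by omega, Or.inr rfl⟩
          · simp [u01, u10, v01, v10]
          · simp only [List.cons_append, List.nil_append, List.Chain', List.isChain_cons_cons,
              List.isChain_singleton, and_true]
            exact ⟨e_xu0, e_u0u1, e_v0u1.symm, e_v0v1, e_v1v2⟩
        · -- use T1 = [U 0, V 1, V 0, U 1]
          push_neg at hch
          have e_u0v1 : G.Adj (U 0) (V 1) := gadj _ _ (fadj_uv (by omega)) hch.1
          have e_u1v2 : G.Adj (U 1) (V 2) := gadj _ _ (fadj_uv (by omega)) hch.2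
          refine ⟨2, [U 0, V 1, V 0, U 1], Or.inr rfl, rfl, ?_, ?_, ?_, e_xu2.symm⟩
          · intro z hz
            simp only [List.mem_cons, List.not_mem_nil, or_false] at hz
            rcases hz with h | h | h | h <;> subst h
            · exact ⟨0, by omega, Or.inl rfl⟩
            · exact ⟨1, by omega, Or.inr rfl⟩
            · exact ⟨0, by omega, Or.inr rfl⟩
            · exact ⟨1, by omega, Or.inl rfl⟩
          · simp [u01, u10, v01, v10]
          · simp only [List.cons_append, List.nil_append, List.Chain', List.isChain_cons_cons,
              List.isChain_singleton, and_true]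
            exact ⟨e_xu0, e_u0v1, e_v0v1.symm, e_v0u1, e_u1v2⟩
      · -- good x
        refine ⟨0, [], Or.inl rfl, rfl, by simp, by simp, ?_, ?_⟩
        · simp only [List.nil_append, List.Chain', List.isChain_cons_cons, List.isChain_singleton, and_true]
          exact gadj _ _ fadj_xv0 hxv
        · exact (gadj _ _ fadj_xu0 hxu).symm
  -- RIGHT PACKAGE
  obtain ⟨r, hr2, rBf, rAf, rprops⟩ :
      ∃ (r : ℕ) (hr2 : r = t-1 ∨ r = t-3) (rBf rAf : Bool → List (Vt t)), ∀ b : Bool,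
        (rBf b).length + (rAf b).length = 2*(t-1-r) ∧
        (∀ z ∈ rBf b ++ rAf b, ∃ i, r < i ∧ i < t ∧ (z = U i ∨ z = V i)) ∧
        (rBf b ++ rAf b).Nodup ∧
        List.Chain' G.Adj ((cond b (U r) (V r)) :: (rBf b ++ [vy])) ∧
        List.Chain' G.Adj (vy :: (rAf b ++ [cond b (V r) (U r)])) := by
    by_cases hyu : R.Adj (U (t-1)) vy
    · -- bad y, u(t-1)y red
      have noRy : ∀ z : Vt t, z ≠ U (t-1) → ¬R.Adj vy z := fun z hz hr =>
        hz (hM _ _ _ hr hyu.symm)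
      have noRu : ∀ z : Vt t, z ≠ vy → ¬R.Adj (U (t-1)) z := fun z hz hr =>
        hz (hM _ _ _ hr hyu)
      have e_v1y : G.Adj (V (t-1)) vy := (gadj _ _ fadj_vy.symm (noRy _ (by simp))).symm
      have e_u2u1 : G.Adj (U (t-2)) (U (t-1)) :=
        (gadj _ _ (fadj_uu' (by omega) (by omega)).symm (noRu _ (by simp))).symm
      have e_v2u1 : G.Adj (V (t-2)) (U (t-1)) :=
        (gadj _ _ (fadj_vu' (by omega) (by omega)).symm (noRu _ (by simp))).symm
      have e_v3y : G.Adj (V (t-3)) vy := (gadj _ _ fadj_v3y.symm (noRy _ (by simp))).symm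
      by_cases hch : R.Adj (U (t-3)) (U (t-2)) ∨ R.Adj (V (t-2)) (V (t-1))
      · -- use P2 = [U(t-3), V(t-2), U(t-1), U(t-2), V(t-1), vy]
        have e_u3v2 : G.Adj (U (t-3)) (V (t-2)) := by
          refine gadj _ _ (fadj_uv' (by omega) (by omega)) ?_
          intro hr
          rcases hch with h | h
          · exact V_ne_U (hM _ _ _ hr h)
          · exact V_ne_U (hM _ _ _ h hr.symm)
        have e_u2v1 : G.Adj (U (t-2)) (V (t-1)) := by
          refine gadj _ _ (fadj_uv' (by omega) (by omega)) ?_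
          intro hr
          rcases hch with h | h
          · exact V_ne_U (hM _ _ _ hr h.symm)
          · exact U_ne_V (hM _ _ _ hr.symm h.symm)
        refine ⟨t-3, Or.inr rfl, fun b => cond b [V (t-2), U (t-1), U (t-2), V (t-1)] [],
          fun b => cond b [] [V (t-1), U (t-2), U (t-1), V (t-2)], ?_⟩
        intro b
        cases b <;> simp only [cond_true, cond_false]
        · refine ⟨by simp only [List.length_cons, List.length_nil]; omega, ?_, ?_, ?_, ?_⟩
          · intro z hz
            simp only [List.nil_append, List.mem_cons, List.not_mem_nil, or_false] at hz
            rcases hz with h | h | h | h <;> subst h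
            · exact ⟨t-1, by omega, by omega, Or.inr rfl⟩
            · exact ⟨t-2, by omega, by omega, Or.inl rfl⟩
            · exact ⟨t-1, by omega, by omega, Or.inl rfl⟩
            · exact ⟨t-2, by omega, by omega, Or.inr rfl⟩
          · simp [U_ne_U (show t-2 < t by omega) (show t-1 < t by omega) (by omega),
              V_ne_V (show t-2 < t by omega) (show t-1 < t by omega) (by omega),
              U_ne_U (show t-1 < t by omega) (show t-2 < t by omega) (by omega),
              V_ne_V (show t-1 < t by omega) (show t-2 < t by omega) (by omega)]
          · simp only [List.nil_append, List.Chain', List.isChain_cons_cons, List.isChain_singleton, and_true]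
            exact e_v3y
          · simp only [List.cons_append, List.nil_append, List.Chain', List.isChain_cons_cons,
              List.isChain_singleton, and_true]
            exact ⟨e_v1y.symm, e_u2v1.symm, e_u2u1, e_v2u1.symm, e_u3v2.symm⟩
        · refine ⟨by simp only [List.length_cons, List.length_nil]; omega, ?_, ?_, ?_, ?_⟩
          · intro z hz
            simp only [List.append_nil, List.mem_cons, List.not_mem_nil, or_false] at hz
            rcases hz with h | h | h | h <;> subst h
            · exact ⟨t-2, by omega, by omega, Or.inr rfl⟩
            · exact ⟨t-1, by omega, by omega, Or.inl rfl⟩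
            · exact ⟨t-2, by omega, by omega, Or.inl rfl⟩
            · exact ⟨t-1, by omega, by omega, Or.inr rfl⟩
          · simp [U_ne_U (show t-2 < t by omega) (show t-1 < t by omega) (by omega),
              V_ne_V (show t-2 < t by omega) (show t-1 < t by omega) (by omega),
              U_ne_U (show t-1 < t by omega) (show t-2 < t by omega) (by omega),
              V_ne_V (show t-1 < t by omega) (show t-2 < t by omega) (by omega)]
          · simp only [List.cons_append, List.nil_append, List.Chain', List.isChain_cons_cons,
              List.isChain_singleton, and_true]
            exact ⟨e_u3v2, e_v2u1, e_u2u1.symm, e_u2v1, e_v1y⟩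
          · simp only [List.nil_append, List.Chain', List.isChain_cons_cons, List.isChain_singleton, and_true]
            exact e_v3y.symm
      · -- use P1 = [U(t-3), U(t-2), U(t-1), V(t-2), V(t-1), vy]
        push_neg at hch
        have e_u3u2 : G.Adj (U (t-3)) (U (t-2)) := gadj _ _ (fadj_uu' (by omega) (by omega)) hch.1
        have e_v2v1 : G.Adj (V (t-2)) (V (t-1)) := gadj _ _ (fadj_vv' (by omega) (by omega)) hch.2
        refine ⟨t-3, Or.inr rfl, fun b => cond b [U (t-2), U (t-1), V (t-2), V (t-1)] [],
          fun b => cond b [] [V (t-1), V (t-2), U (t-1), U (t-2)], ?_⟩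
        intro b
        cases b <;> simp only [cond_true, cond_false]
        · refine ⟨by simp only [List.length_cons, List.length_nil]; omega, ?_, ?_, ?_, ?_⟩
          · intro z hz
            simp only [List.nil_append, List.mem_cons, List.not_mem_nil, or_false] at hz
            rcases hz with h | h | h | h <;> subst h
            · exact ⟨t-1, by omega, by omega, Or.inr rfl⟩
            · exact ⟨t-2, by omega, by omega, Or.inr rfl⟩
            · exact ⟨t-1, by omega, by omega, Or.inl rfl⟩
            · exact ⟨t-2, by omega, by omega, Or.inl rfl⟩
          · simp [U_ne_U (show t-2 < t by omega) (show t-1 < t by omega) (by omega),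
              V_ne_V (show t-2 < t by omega) (show t-1 < t by omega) (by omega),
              U_ne_U (show t-1 < t by omega) (show t-2 < t by omega) (by omega),
              V_ne_V (show t-1 < t by omega) (show t-2 < t by omega) (by omega)]
          · simp only [List.nil_append, List.Chain', List.isChain_cons_cons, List.isChain_singleton, and_true]
            exact e_v3y
          · simp only [List.cons_append, List.nil_append, List.Chain', List.isChain_cons_cons,
              List.isChain_singleton, and_true]
            exact ⟨e_v1y.symm, e_v2v1.symm, e_v2u1, e_u2u1.symm, e_u3u2.symm⟩
        · refine ⟨by simp only [List.length_cons, List.length_nil]; omega, ?_, ?_, ?_, ?_⟩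
          · intro z hz
            simp only [List.append_nil, List.mem_cons, List.not_mem_nil, or_false] at hz
            rcases hz with h | h | h | h <;> subst h
            · exact ⟨t-2, by omega, by omega, Or.inl rfl⟩
            · exact ⟨t-1, by omega, by omega, Or.inl rfl⟩
            · exact ⟨t-2, by omega, by omega, Or.inr rfl⟩
            · exact ⟨t-1, by omega, by omega, Or.inr rfl⟩
          · simp [U_ne_U (show t-2 < t by omega) (show t-1 < t by omega) (by omega),
              V_ne_V (show t-2 < t by omega) (show t-1 < t by omega) (by omega),
              U_ne_U (show t-1 < t by omega) (show t-2 < t by omega) (by omega),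
              V_ne_V (show t-1 < t by omega) (show t-2 < t by omega) (by omega)]
          · simp only [List.cons_append, List.nil_append, List.Chain', List.isChain_cons_cons,
              List.isChain_singleton, and_true]
            exact ⟨e_u3u2, e_u2u1, e_v2u1.symm, e_v2v1, e_v1y⟩
          · simp only [List.nil_append, List.Chain', List.isChain_cons_cons, List.isChain_singleton, and_true]
            exact e_v3y.symm
    · by_cases hyv : R.Adj (V (t-1)) vy
      · -- bad y, v(t-1)y red
        have noRy : ∀ z : Vt t, z ≠ V (t-1) → ¬R.Adj vy z := fun z hz hr =>
          hz (hM _ _ _ hr hyv.symm)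
        have noRv : ∀ z : Vt t, z ≠ vy → ¬R.Adj (V (t-1)) z := fun z hz hr =>
          hz (hM _ _ _ hr hyv)
        have e_u1y : G.Adj (U (t-1)) vy := (gadj _ _ fadj_uy.symm (noRy _ (by simp))).symm
        have e_v2v1 : G.Adj (V (t-2)) (V (t-1)) :=
          (gadj _ _ (fadj_vv' (by omega) (by omega)).symm (noRv _ (by simp))).symm
        have e_u2v1 : G.Adj (U (t-2)) (V (t-1)) :=
          (gadj _ _ (fadj_uv' (by omega) (by omega)).symm (noRv _ (by simp))).symm
        have e_v3y : G.Adj (V (t-3)) vy := gadj _ _ fadj_v3y (by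
          intro hr
          exact V_ne_V (by omega) (by omega) (by omega) (hM _ _ _ hr.symm hyv.symm))
        by_cases hch : R.Adj (U (t-3)) (U (t-2)) ∨ R.Adj (V (t-2)) (U (t-1))
        · -- use Q2 = [U(t-3), V(t-2), V(t-1), U(t-2), U(t-1), vy]
          have e_u3v2 : G.Adj (U (t-3)) (V (t-2)) := by
            refine gadj _ _ (fadj_uv' (by omega) (by omega)) ?_
            intro hr
            rcases hch with h | h
            · exact V_ne_U (hM _ _ _ hr h)
            · exact U_ne_U (by omega) (by omega) (by omega) (hM _ _ _ hr.symm h)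
          have e_u2u1 : G.Adj (U (t-2)) (U (t-1)) := by
            refine gadj _ _ (fadj_uu' (by omega) (by omega)) ?_
            intro hr
            rcases hch with h | h
            · exact U_ne_U (by omega) (by omega) (by omega) (hM _ _ _ h.symm hr).symm
            · exact V_ne_U (hM _ _ _ hr.symm h.symm).symm
          refine ⟨t-3, Or.inr rfl, fun b => cond b [V (t-2), V (t-1), U (t-2), U (t-1)] [],
            fun b => cond b [] [U (t-1), U (t-2), V (t-1), V (t-2)], ?_⟩
          intro b
          cases b <;> simp only [cond_true, cond_false]
          · refine ⟨by simp only [List.length_cons, List.length_nil]; omega, ?_, ?_, ?_, ?_⟩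
            · intro z hz
              simp only [List.nil_append, List.mem_cons, List.not_mem_nil, or_false] at hz
              rcases hz with h | h | h | h <;> subst h
              · exact ⟨t-1, by omega, by omega, Or.inl rfl⟩
              · exact ⟨t-2, by omega, by omega, Or.inl rfl⟩
              · exact ⟨t-1, by omega, by omega, Or.inr rfl⟩
              · exact ⟨t-2, by omega, by omega, Or.inr rfl⟩
            · simp [U_ne_U (show t-2 < t by omega) (show t-1 < t by omega) (by omega),
                V_ne_V (show t-2 < t by omega) (show t-1 < t by omega) (by omega),
                U_ne_U (show t-1 < t by omega) (show t-2 < t by omega) (by omega),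
                V_ne_V (show t-1 < t by omega) (show t-2 < t by omega) (by omega)]
            · simp only [List.nil_append, List.Chain', List.isChain_cons_cons, List.isChain_singleton, and_true]
              exact e_v3y
            · simp only [List.cons_append, List.nil_append, List.Chain', List.isChain_cons_cons,
                List.isChain_singleton, and_true]
              exact ⟨e_u1y.symm, e_u2u1.symm, e_u2v1, e_v2v1.symm, e_u3v2.symm⟩
          · refine ⟨by simp only [List.length_cons, List.length_nil]; omega, ?_, ?_, ?_, ?_⟩
            · intro z hz
              simp only [List.append_nil, List.mem_cons, List.not_mem_nil, or_false] at hz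
              rcases hz with h | h | h | h <;> subst h
              · exact ⟨t-2, by omega, by omega, Or.inr rfl⟩
              · exact ⟨t-1, by omega, by omega, Or.inr rfl⟩
              · exact ⟨t-2, by omega, by omega, Or.inl rfl⟩
              · exact ⟨t-1, by omega, by omega, Or.inl rfl⟩
            · simp [U_ne_U (show t-2 < t by omega) (show t-1 < t by omega) (by omega),
                V_ne_V (show t-2 < t by omega) (show t-1 < t by omega) (by omega),
                U_ne_U (show t-1 < t by omega) (show t-2 < t by omega) (by omega),
                V_ne_V (show t-1 < t by omega) (show t-2 < t by omega) (by omega)]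
            · simp only [List.cons_append, List.nil_append, List.Chain', List.isChain_cons_cons,
                List.isChain_singleton, and_true]
              exact ⟨e_u3v2, e_v2v1, e_u2v1.symm, e_u2u1, e_u1y⟩
            · simp only [List.nil_append, List.Chain', List.isChain_cons_cons, List.isChain_singleton, and_true]
              exact e_v3y.symm
        · -- use Q1 = [U(t-3), U(t-2), V(t-1), V(t-2), U(t-1), vy]
          push_neg at hch
          have e_u3u2 : G.Adj (U (t-3)) (U (t-2)) :=
            gadj _ _ (fadj_uu' (by omega) (by omega)) hch.1
          have e_v2u1 : G.Adj (V (t-2)) (U (t-1)) :=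
            gadj _ _ (fadj_vu' (by omega) (by omega)) hch.2
          refine ⟨t-3, Or.inr rfl, fun b => cond b [U (t-2), V (t-1), V (t-2), U (t-1)] [],
            fun b => cond b [] [U (t-1), V (t-2), V (t-1), U (t-2)], ?_⟩
          intro b
          cases b <;> simp only [cond_true, cond_false]
          · refine ⟨by simp only [List.length_cons, List.length_nil]; omega, ?_, ?_, ?_, ?_⟩
            · intro z hz
              simp only [List.nil_append, List.mem_cons, List.not_mem_nil, or_false] at hz
              rcases hz with h | h | h | h <;> subst h
              · exact ⟨t-1, by omega, by omega, Or.inl rfl⟩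
              · exact ⟨t-2, by omega, by omega, Or.inr rfl⟩
              · exact ⟨t-1, by omega, by omega, Or.inr rfl⟩
              · exact ⟨t-2, by omega, by omega, Or.inl rfl⟩
            · simp [U_ne_U (show t-2 < t by omega) (show t-1 < t by omega) (by omega),
                V_ne_V (show t-2 < t by omega) (show t-1 < t by omega) (by omega),
                U_ne_U (show t-1 < t by omega) (show t-2 < t by omega) (by omega),
                V_ne_V (show t-1 < t by omega) (show t-2 < t by omega) (by omega)]
            · simp only [List.nil_append, List.Chain', List.isChain_cons_cons, List.isChain_singleton, and_true]
              exact e_v3y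
            · simp only [List.cons_append, List.nil_append, List.Chain', List.isChain_cons_cons,
                List.isChain_singleton, and_true]
              exact ⟨e_u1y.symm, e_v2u1.symm, e_v2v1, e_u2v1.symm, e_u3u2.symm⟩
          · refine ⟨by simp only [List.length_cons, List.length_nil]; omega, ?_, ?_, ?_, ?_⟩
            · intro z hz
              simp only [List.append_nil, List.mem_cons, List.not_mem_nil, or_false] at hz
              rcases hz with h | h | h | h <;> subst h
              · exact ⟨t-2, by omega, by omega, Or.inl rfl⟩
              · exact ⟨t-1, by omega, by omega, Or.inr rfl⟩
              · exact ⟨t-2, by omega, by omega, Or.inr rfl⟩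
              · exact ⟨t-1, by omega, by omega, Or.inl rfl⟩
            · simp [U_ne_U (show t-2 < t by omega) (show t-1 < t by omega) (by omega),
                V_ne_V (show t-2 < t by omega) (show t-1 < t by omega) (by omega),
                U_ne_U (show t-1 < t by omega) (show t-2 < t by omega) (by omega),
                V_ne_V (show t-1 < t by omega) (show t-2 < t by omega) (by omega)]
            · simp only [List.cons_append, List.nil_append, List.Chain', List.isChain_cons_cons,
                List.isChain_singleton, and_true]
              exact ⟨e_u3u2, e_u2v1, e_v2v1.symm, e_v2u1, e_u1y⟩
            · simp only [List.nil_append, List.Chain', List.isChain_cons_cons, List.isChain_singleton, and_true]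
              exact e_v3y.symm
      · -- good y
        refine ⟨t-1, Or.inl rfl, fun _ => [], fun _ => [], ?_⟩
        intro b
        cases b <;> simp only [cond_true, cond_false]
        · exact ⟨by simp only [List.length_cons, List.length_nil]; omega, by simp, by simp, by
            simp only [List.nil_append, List.Chain', List.isChain_cons_cons, List.isChain_singleton, and_true]
            exact gadj _ _ fadj_vy hyv, by
            simp only [List.nil_append, List.Chain', List.isChain_cons_cons, List.isChain_singleton, and_true]
            exact (gadj _ _ fadj_uy hyu).symm⟩
        · exact ⟨by simp only [List.length_cons, List.length_nil]; omega, by simp, by simp, by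
            simp only [List.nil_append, List.Chain', List.isChain_cons_cons, List.isChain_singleton, and_true]
            exact gadj _ _ fadj_uy hyu, by
            simp only [List.nil_append, List.Chain', List.isChain_cons_cons, List.isChain_singleton, and_true]
            exact (gadj _ _ fadj_vy hyv).symm⟩
  -- MIDDLE AND ASSEMBLY
  set c : ℕ → Bool := fun g => decide (R.Adj (U g) (U (g+1)) ∨ R.Adj (V g) (V (g+1))) with hc
  set sp : ℕ → Bool := spar c l with hsp
  set A : ℕ → Vt t := fun i => cond (sp i) (V i) (U i) with hA
  set B : ℕ → Vt t := fun i => cond (sp i) (U i) (V i) with hB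
  have hspl : sp l = false := spar_base c l
  have hBl : B l = V l := by rw [hB]; simp [hspl]
  have hAl : A l = U l := by rw [hA]; simp [hspl]
  obtain ⟨hrlen, hRmem, ndR, ch3', ch4'⟩ := rprops (sp r)
  have hBr : B r = cond (sp r) (U r) (V r) := by rw [hB]
  have hAr : A r = cond (sp r) (V r) (U r) := by rw [hA]
  refine contains_cycle ht G l r (by omega) (by omega) A B ?_ leftInt (rBf (sp r)) (rAf (sp r))
    hlen ?_ hLmem hRmem ndL ndR ?_ ?_ ?_ ?_ ?_
  · intro i _ _
    rw [hA, hB]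
    cases hsg : sp i <;> simp [hsg]
  · exact hrlen
  · rw [hBl]; exact ch1'
  · -- middle gaps
    intro g hg1 hg2
    have hg1t : g + 1 < t := by omega
    have hstep : sp (g+1) = xor (sp g) (c g) := spar_succ c hg1
    by_cases hcg : R.Adj (U g) (U (g+1)) ∨ R.Adj (V g) (V (g+1))
    · have hcg' : c g = true := by rw [hc]; simp [hcg]
      have hnc1 : ¬R.Adj (V g) (U (g+1)) := by
        intro hr
        rcases hcg with h | h
        · exact V_ne_U (hM _ _ _ hr.symm h.symm)
        · exact U_ne_V (hM _ _ _ hr h)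
      have hnc2 : ¬R.Adj (U g) (V (g+1)) := by
        intro hr
        rcases hcg with h | h
        · exact V_ne_U (hM _ _ _ hr h)
        · exact U_ne_V (hM _ _ _ hr.symm h.symm)
      simp only [hA, hB, hstep, hcg', Bool.xor_true]
      cases hsg : sp g <;>
        simp only [hsg, Bool.not_true, Bool.not_false, cond_true, cond_false]
      · exact ⟨gadj _ _ (fadj_vu hg1t) hnc1, gadj _ _ (fadj_uv hg1t) hnc2⟩
      · exact ⟨gadj _ _ (fadj_uv hg1t) hnc2, gadj _ _ (fadj_vu hg1t) hnc1⟩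
    · have hcg' : c g = false := by rw [hc]; simp [hcg]
      push_neg at hcg
      simp only [hA, hB, hstep, hcg', Bool.xor_false]
      cases hsg : sp g <;> simp only [hsg, cond_true, cond_false]
      · exact ⟨gadj _ _ (fadj_vv hg1t) hcg.2, gadj _ _ (fadj_uu hg1t) hcg.1⟩
      · exact ⟨gadj _ _ (fadj_uu hg1t) hcg.1, gadj _ _ (fadj_vv hg1t) hcg.2⟩
  · rw [hBr]; exact ch3'
  · rw [hAr]; exact ch4'
  · rw [hAl]; exact ch5'

end mainlemma

end Fp

theorem stmt_5 (n t : ℕ) (hn : 12 ≤ n) (he : Even n) (ht : t = (n - 2) / 2) :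
    Fintype.card (Vt t) = n ∧ (Fgraph t).edgeSet.ncard = 2 * n - 2 ∧
      Arrows (Fgraph t) (pathGraph 3) (cycleGraph n) := by
  obtain ⟨k, hk⟩ := he
  have ht5 : 5 ≤ t := by omega
  have hnt : n = 2 * t + 2 := by omega
  haveI : NeZero t := ⟨by omega⟩
  refine ⟨?_, ?_, ?_⟩
  · rw [Fp.card_Vt]; omega
  · rw [Fp.ncard_edgeSet ht5]; omega
  · intro R hR
    by_cases hp3 : Contains R (pathGraph 3)
    · exact Or.inl hp3
    · right
      have hM : ∀ a b c : Vt t, R.Adj a b → R.Adj a c → b = c := by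
        intro a b c h1 h2
        by_contra hbc
        apply hp3
        refine ⟨⟨![b, a, c], ?_⟩, ?_⟩
        · intro u v huv
          rw [SimpleGraph.pathGraph_adj] at huv
          fin_cases u <;> fin_cases v <;> (try simp at huv) <;> (try simp) <;>
            first
              | exact h1.symm
              | exact h1
              | exact h2
              | exact h2.symm
        · intro u v huv
          fin_cases u <;> fin_cases v <;> (try simp at huv) <;> (try simp) <;>
            first
              | rfl
              | exact absurd huv h1.ne.symm
              | exact absurd huv hbc
              | exact absurd huv h1.ne
              | exact absurd huv h2.ne
              | exact absurd huv (fun hh => hbc hh.symm)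
              | exact absurd huv h2.ne.symm
      rw [hnt]
      exact Fp.main_cycle ht5 R hM
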